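/- Let R be a commutative ring, U(v) = v − 2η, Q, h̃ : ℂ → R with Q(v) invertible for all v, and suppose T⁽ᴶ⁾(v) = Q(U⁻¹v)·Q(Uᴶ⁻¹v)·Σ_{k=0}^{J−1} h̃(Uᵏ⁻¹v)^L·Q(Uᵏ⁻¹v)⁻¹·Q(Uᵏv)⁻¹ for all 0 ≤ J ≤ N and all v, and that Q(Uᴺv) = Q(v) and h̃(Uᴺv) = h̃(v) for all v. Then for every 0 ≤ J ≤ N and every v: T⁽ᴶ⁾(Uv) + T⁽ᴺ⁻ᴶ⁾(U^{J+1}v) = Q(Uᴶv)·Q(v)⁻¹·T⁽ᴺ⁾(Uv). -/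
import Mathlib


open Finset

/-- The algebraic core identity relating the family of `QQ`-relations to the single
`J = N` case: `T⁽ᴶ⁾(Uv) + T⁽ᴺ⁻ᴶ⁾(U^{J+1}v) = Q(Uᴶv) Q(v)⁻¹ T⁽ᴺ⁾(Uv)` for `0 ≤ J ≤ N`,
where `U v = v - 2η`. -/
theorem eightVertex_QQ_family_core {R : Type*} [CommRing R] (η : ℂ) (L N : ℕ)
    (hN : 0 < N)
    (Q : ℂ → Rˣ) (htil : ℂ → R) (Tf : ℕ → ℂ → R)
    (hfus : ∀ J : ℕ, J ≤ N → ∀ v : ℂ,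
      Tf J v = (Q (v + 2*η) : R) * (Q (v - 2*((J : ℂ) - 1)*η) : R) *
        ∑ k ∈ range J, htil (v - 2*((k : ℂ) - 1)*η) ^ L *
          ((Q (v - 2*((k : ℂ) - 1)*η))⁻¹ : Rˣ) * ((Q (v - 2*(k : ℂ)*η))⁻¹ : Rˣ))
    (hQper : ∀ v : ℂ, Q (v - 2*(N : ℂ)*η) = Q v)
    (hhper : ∀ v : ℂ, htil (v - 2*(N : ℂ)*η) = htil v) :
    ∀ J : ℕ, J ≤ N → ∀ v : ℂ,
      Tf J (v - 2*η) + Tf (N - J) (v - 2*((J : ℂ) + 1)*η)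
        = (Q (v - 2*(J : ℂ)*η) : R) * ((Q v)⁻¹ : Rˣ) * Tf N (v - 2*η) := by
  intro J hJ v
  set g : ℕ → R := fun k =>
    htil (v - 2*(k : ℂ)*η) ^ L * ((Q (v - 2*(k : ℂ)*η))⁻¹ : Rˣ) *
      ((Q (v - 2*((k : ℂ)+1)*η))⁻¹ : Rˣ) with hg
  have a2 : ∀ k : ℕ, (v - 2*η) - 2*((k : ℂ) - 1)*η = v - 2*(k : ℂ)*η := fun k => by ring
  have a3 : ∀ k : ℕ, (v - 2*η) - 2*(k : ℂ)*η = v - 2*((k : ℂ)+1)*η := fun k => by ring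
  have a1 : (v - 2*η) + 2*η = v := by ring
  have e1 : Tf J (v - 2*η) = (Q v : R) * (Q (v - 2*(J : ℂ)*η) : R) * ∑ k ∈ range J, g k := by
    rw [hfus J hJ, a1, a2 J]
    simp only [a2, a3, hg]
  have e3 : Tf N (v - 2*η) = (Q v : R) * (Q v : R) * ∑ k ∈ range N, g k := by
    rw [hfus N le_rfl, a1, a2 N]
    have : v - 2*(N : ℂ)*η = v - 2*(N : ℂ)*η := rfl
    rw [hQper v]
    simp only [a2, a3, hg]
  have hcast : ((N - J : ℕ) : ℂ) = (N : ℂ) - (J : ℂ) := by push_cast [hJ]; ring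
  have b1 : (v - 2*((J : ℂ)+1)*η) + 2*η = v - 2*(J : ℂ)*η := by ring
  have b2 : (v - 2*((J : ℂ)+1)*η) - 2*(((N : ℂ) - (J : ℂ)) - 1)*η = v - 2*(N : ℂ)*η := by ring
  have e2 : Tf (N - J) (v - 2*((J : ℂ)+1)*η)
      = (Q (v - 2*(J : ℂ)*η) : R) * (Q v : R) * ∑ k ∈ Ico J N, g k := by
    rw [hfus (N - J) (Nat.sub_le N J), b1, hcast, b2, hQper v]
    congr 1
    rw [Finset.sum_Ico_eq_sum_range]
    refine Finset.sum_congr rfl fun i _ => ?_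
    have c1 : v - 2*((J + i : ℕ) : ℂ)*η = (v - 2*((J : ℂ)+1)*η) - 2*((i : ℂ) - 1)*η := by
      push_cast; ring
    have c2 : v - 2*(((J + i : ℕ) : ℂ)+1)*η = (v - 2*((J : ℂ)+1)*η) - 2*(i : ℂ)*η := by
      push_cast; ring
    simp only [hg, c1, c2]
  rw [e1, e2, e3, ← Finset.sum_range_add_sum_Ico g hJ]
  have hinv : (((Q v)⁻¹ : Rˣ) : R) * (Q v : R) = 1 := Units.inv_mul (Q v)
  calc (Q v : R) * (Q (v - 2*(J : ℂ)*η) : R) * ∑ k ∈ range J, g k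
        + (Q (v - 2*(J : ℂ)*η) : R) * (Q v : R) * ∑ k ∈ Ico J N, g k
      = (Q (v - 2*(J : ℂ)*η) : R) * (Q v : R) *
          ((∑ k ∈ range J, g k) + ∑ k ∈ Ico J N, g k) := by ring
    _ = (Q (v - 2*(J : ℂ)*η) : R) * ((Q v)⁻¹ : Rˣ) *
          ((Q v : R) * (Q v : R) * ((∑ k ∈ range J, g k) + ∑ k ∈ Ico J N, g k)) := by
        rw [mul_assoc ((Q (v - 2*(J : ℂ)*η)) : R) ((Q v)⁻¹ : Rˣ)]
        rw [show (((Q v)⁻¹ : Rˣ) : R) * ((Q v : R) * (Q v : R) *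
            ((∑ k ∈ range J, g k) + ∑ k ∈ Ico J N, g k))
          = ((((Q v)⁻¹ : Rˣ) : R) * (Q v : R)) * ((Q v : R) *
            ((∑ k ∈ range J, g k) + ∑ k ∈ Ico J N, g k)) from by ring, hinv, one_mul]
        ring
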